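/- arXiv:math/0502074 — 3 statements merged into one kernel-verified Lean document; each statement's English description precedes it below -/
import Mathlib

section
/- Let R be a commutative Noetherian ring and let 0 → L → M → N → 0 be a short exact sequence of R-modules. Then M is weakly Laskerian if and only if both L and N are weakly Laskerian. -/
open CategoryTheory Opposite

universe u

/-- A module is weakly Laskerian if every quotient has finitely many associated primes. -/
def IsWeaklyLaskerian (R : Type u) [CommRing R] (M : Type u) [AddCommGroup M]
    [Module R M] : Prop :=
  ∀ N : Submodule R M, (associatedPrimes R (M ⧸ N)).Finite

/-- Associated primes of the middle of a short exact sequence are contained in the union of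
those of the ends. -/
theorem associatedPrimes_subset_union_of_exact {R : Type u} [CommRing R] [IsNoetherianRing R]
    {L M N : Type u} [AddCommGroup L] [Module R L] [AddCommGroup M] [Module R M]
    [AddCommGroup N] [Module R N] (f : L →ₗ[R] M) (g : M →ₗ[R] N)
    (hf : Function.Injective f) (hfg : Function.Exact f g) :
    associatedPrimes R M ⊆ associatedPrimes R L ∪ associatedPrimes R N := by
  intro p hp
  rw [AssociatedPrimes.mem_iff, isAssociatedPrime_iff] at hp
  obtain ⟨hp, x, hx⟩ := hp
  have hmem : ∀ s : R, s ∈ p ↔ s • x = 0 := fun s => by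
    rw [hx, Submodule.mem_colon_singleton, Submodule.mem_bot]
  by_cases h : ∃ r : R, r • x ≠ 0 ∧ g (r • x) = 0
  · left
    obtain ⟨r, hr0, hrg⟩ := h
    obtain ⟨y, hy⟩ := (hfg (r • x)).mp hrg
    refine isAssociatedPrime_iff.mpr ⟨hp, y, ?_⟩
    ext s
    rw [Submodule.mem_colon_singleton, Submodule.mem_bot, hmem]
    constructor
    · intro hs
      apply hf
      rw [map_smul, hy, map_zero, smul_smul, mul_comm, ← smul_smul, hs, smul_zero]
    · intro hs
      have h1 : (s * r) • x = 0 := by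
        have := congrArg f hs
        rw [map_smul, hy, map_zero, smul_smul] at this
        exact this
      have h2 : s * r ∈ p := (hmem _).mpr h1
      have hrnot : r ∉ p := fun hr => hr0 ((hmem _).mp hr)
      rcases hp.mem_or_mem h2 with h | h
      · exact (hmem _).mp h
      · exact absurd h hrnot
  · right
    push_neg at h
    refine isAssociatedPrime_iff.mpr ⟨hp, g x, ?_⟩
    ext s
    rw [Submodule.mem_colon_singleton, Submodule.mem_bot, hmem]
    constructor
    · intro hs
      rw [← map_smul, hs, map_zero]
    · intro hs
      by_contra hsx
      exact (h s hsx) (by rw [map_smul]; exact hs)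

theorem isWeaklyLaskerian_iff_of_shortExact (R : Type u) [CommRing R] [IsNoetherianRing R]
    (L M N : Type u) [AddCommGroup L] [Module R L] [AddCommGroup M] [Module R M]
    [AddCommGroup N] [Module R N] (f : L →ₗ[R] M) (g : M →ₗ[R] N)
    (hf : Function.Injective f) (hg : Function.Surjective g) (hfg : Function.Exact f g) :
    IsWeaklyLaskerian R M ↔ IsWeaklyLaskerian R L ∧ IsWeaklyLaskerian R N := by
  have hker : LinearMap.ker g = LinearMap.range f := hfg.linearMap_ker_eq
  constructor
  · intro hM
    constructor
    · -- L is weakly Laskerian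
      intro N'
      -- L ⧸ N' embeds into M ⧸ (N'.map f)
      set φ : L →ₗ[R] M ⧸ (N'.map f) := (N'.map f).mkQ.comp f with hφ
      have hkerφ : LinearMap.ker φ = N' := by
        rw [hφ, LinearMap.ker_comp, Submodule.ker_mkQ,
          Submodule.comap_map_eq_of_injective hf]
      have e : (L ⧸ N') ≃ₗ[R] LinearMap.range φ :=
        (Submodule.quotEquivOfEq _ _ hkerφ.symm).trans φ.quotKerEquivRange
      rw [LinearEquiv.AssociatedPrimes.eq e]
      exact (hM (N'.map f)).subset
        (associatedPrimes.subset_of_injective (f := (LinearMap.range φ).subtype)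
          (Submodule.injective_subtype _))
    · -- N is weakly Laskerian
      intro K
      set φ : M →ₗ[R] N ⧸ K := K.mkQ.comp g with hφ
      have hφs : Function.Surjective φ := (Submodule.mkQ_surjective K).comp hg
      have e : (M ⧸ LinearMap.ker φ) ≃ₗ[R] N ⧸ K := φ.quotKerEquivOfSurjective hφs
      rw [← LinearEquiv.AssociatedPrimes.eq e]
      exact hM _
  · rintro ⟨hL, hN⟩ P
    -- the image K of L in M ⧸ P
    set φ : L →ₗ[R] M ⧸ P := P.mkQ.comp f with hφ
    set K : Submodule R (M ⧸ P) := LinearMap.range φ with hK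
    have h1 : (associatedPrimes R K).Finite := by
      have e : (L ⧸ LinearMap.ker φ) ≃ₗ[R] K := φ.quotKerEquivRange
      rw [← LinearEquiv.AssociatedPrimes.eq e]
      exact hL _
    have h2 : (associatedPrimes R ((M ⧸ P) ⧸ K)).Finite := by
      -- (M ⧸ P) ⧸ K ≃ M ⧸ (range f ⊔ P) ≃ N ⧸ (P.map g)
      have hKeq : K = (LinearMap.range f ⊔ P).map P.mkQ := by
        rw [Submodule.map_sup, Submodule.mkQ_map_self, sup_bot_eq, hK, hφ,
          LinearMap.range_comp]
      have e1 : ((M ⧸ P) ⧸ K) ≃ₗ[R] M ⧸ (LinearMap.range f ⊔ P) := by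
        rw [hKeq]
        exact Submodule.quotientQuotientEquivQuotient P (LinearMap.range f ⊔ P) le_sup_right
      set ψ : M →ₗ[R] N ⧸ (P.map g) := (P.map g).mkQ.comp g with hψ
      have hψs : Function.Surjective ψ := (Submodule.mkQ_surjective _).comp hg
      have hkerψ : LinearMap.ker ψ = LinearMap.range f ⊔ P := by
        rw [hψ, LinearMap.ker_comp, Submodule.ker_mkQ, Submodule.comap_map_eq, hker, sup_comm]
      have e2 : (M ⧸ (LinearMap.range f ⊔ P)) ≃ₗ[R] N ⧸ (P.map g) :=
        (Submodule.quotEquivOfEq _ _ hkerψ.symm).trans (ψ.quotKerEquivOfSurjective hψs)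
      rw [LinearEquiv.AssociatedPrimes.eq (e1.trans e2)]
      exact hN _
    exact (h1.union h2).subset
      (associatedPrimes_subset_union_of_exact K.subtype K.mkQ
        (Submodule.injective_subtype K)
        (by rw [LinearMap.exact_iff, Submodule.ker_mkQ, Submodule.range_subtype]))
end

section
/- Let R be a commutative Noetherian ring, M a weakly Laskerian R-module, and N a finitely generated R-module. Then Ext^i_R(N, M) is weakly Laskerian for all i ≥ 0. -/
open CategoryTheory Opposite

universe u

section WL
variable {R : Type u} [CommRing R] {M M' : Type u} [AddCommGroup M] [Module R M]
  [AddCommGroup M'] [Module R M']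

lemma wl_ass_finite (hM : IsWeaklyLaskerian R M) : (associatedPrimes R M).Finite := by
  refine Set.Finite.subset (hM ⊥) ?_
  exact associatedPrimes.subset_of_injective
    (Submodule.quotEquivOfEqBot ⊥ rfl).symm.injective

lemma wl_of_surjective (hM : IsWeaklyLaskerian R M) (f : M →ₗ[R] M')
    (hf : Function.Surjective f) : IsWeaklyLaskerian R M' := by
  intro N
  have hs : Function.Surjective ((N.mkQ).comp f) := (Submodule.mkQ_surjective N).comp hf
  have e := LinearMap.quotKerEquivOfSurjective _ hs
  rw [← LinearEquiv.AssociatedPrimes.eq e]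
  exact hM _

lemma wl_of_injective (hM : IsWeaklyLaskerian R M) (f : M' →ₗ[R] M)
    (hf : Function.Injective f) : IsWeaklyLaskerian R M' := by
  intro N
  set N' : Submodule R M := N.map f
  have hle : N ≤ (N').comap f := Submodule.le_comap_map f N
  set g : (M' ⧸ N) →ₗ[R] (M ⧸ N') := Submodule.mapQ N N' f hle
  have hg : Function.Injective g := by
    intro a b hab
    obtain ⟨a, rfl⟩ := Submodule.Quotient.mk_surjective N a
    obtain ⟨b, rfl⟩ := Submodule.Quotient.mk_surjective N b
    have hab2 : Submodule.Quotient.mk (f a) = (Submodule.Quotient.mk (f b) : M ⧸ N') := by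
      simpa [g, Submodule.mapQ_apply] using hab
    rw [Submodule.Quotient.eq] at hab2 ⊢
    rw [← map_sub] at hab2
    have := Submodule.comap_map_eq_of_injective hf N ▸
      (Submodule.mem_comap.mpr hab2 : a - b ∈ (N.map f).comap f)
    exact this
  exact Set.Finite.subset (hM N') (associatedPrimes.subset_of_injective hg)

lemma wl_congr (e : M ≃ₗ[R] M') (hM : IsWeaklyLaskerian R M) : IsWeaklyLaskerian R M' :=
  wl_of_surjective hM e.toLinearMap e.surjective

/-- associated primes of an extension -/
lemma ass_subset_union (A : Submodule R M) :
    associatedPrimes R M ⊆ associatedPrimes R A ∪ associatedPrimes R (M ⧸ A) := by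
  exact associatedPrimes.subset_union_of_exact A.injective_subtype (LinearMap.exact_subtype_mkQ A)

lemma wl_prod (hM : IsWeaklyLaskerian R M) (hM' : IsWeaklyLaskerian R M') :
    IsWeaklyLaskerian R (M × M') := by
  intro N
  set π := N.mkQ
  set A : Submodule R ((M × M') ⧸ N) := LinearMap.range (π.comp (LinearMap.inl R M M')) with hA
  refine Set.Finite.subset (Set.Finite.union ?_ ?_) (ass_subset_union A)
  · exact wl_ass_finite (wl_of_surjective hM (π.comp (LinearMap.inl R M M')).rangeRestrict
      (LinearMap.surjective_rangeRestrict _))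
  · refine wl_ass_finite (wl_of_surjective hM' (A.mkQ.comp (π.comp (LinearMap.inr R M M'))) ?_)
    intro q
    obtain ⟨q', rfl⟩ := A.mkQ_surjective q
    obtain ⟨⟨a, b⟩, rfl⟩ := N.mkQ_surjective q'
    refine ⟨b, ?_⟩
    have h1 : ((a, b) : M × M') = (a, 0) + (0, b) := by simp
    have h2 : A.mkQ (π (a, 0)) = 0 := by
      rw [Submodule.mkQ_apply, Submodule.Quotient.mk_eq_zero]
      exact ⟨a, rfl⟩
    calc A.mkQ (π (0, b)) = A.mkQ (π (a, 0)) + A.mkQ (π (0, b)) := by rw [h2, zero_add]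
    _ = A.mkQ (π ((a, b))) := by rw [← map_add, ← map_add, ← h1]

lemma wl_subsingleton [Subsingleton M] : IsWeaklyLaskerian R M := by
  intro N
  haveI : Subsingleton (M ⧸ N) := Function.Surjective.subsingleton N.mkQ_surjective
  rw [associatedPrimes.eq_empty_of_subsingleton]
  exact Set.finite_empty

def finSuccLinearEquiv (n : ℕ) : (Fin (n + 1) → M) ≃ₗ[R] M × (Fin n → M) where
  toFun f := (f 0, fun i => f i.succ)
  invFun p := Fin.cons p.1 p.2
  map_add' f g := rfl
  map_smul' c f := rfl
  left_inv f := by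
    funext i
    refine Fin.cases ?_ (fun j => ?_) i <;> simp
  right_inv p := by
    refine Prod.ext ?_ (funext fun i => ?_) <;> simp

lemma wl_pi (hM : IsWeaklyLaskerian R M) (n : ℕ) : IsWeaklyLaskerian R (Fin n → M) := by
  induction n with
  | zero => exact wl_subsingleton
  | succ n ih => exact wl_congr (finSuccLinearEquiv n).symm (wl_prod hM ih)

end WL

section Res

open CategoryTheory

variable {R : Type u} [CommRing R] [IsNoetherianRing R]

/-- Data of a finitely generated stage of a free resolution. -/
structure Syz (R : Type u) [CommRing R] where
  c : ℕ
  K : ModuleCat.{u} R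
  fin : Module.Finite R K
  π : (Fin c → R) →ₗ[R] K
  surj : Function.Surjective π

noncomputable def syzStep (s : Syz R) : Syz R :=
  haveI : Module.Finite R (LinearMap.ker s.π) :=
    Module.Finite.iff_fg.mpr (IsNoetherian.noetherian _)
  { c := (Module.Finite.exists_fin' R (LinearMap.ker s.π)).choose
    K := ModuleCat.of R (LinearMap.ker s.π)
    fin := Module.Finite.iff_fg.mpr (IsNoetherian.noetherian _)
    π := (Module.Finite.exists_fin' R (LinearMap.ker s.π)).choose_spec.choose
    surj := (Module.Finite.exists_fin' R (LinearMap.ker s.π)).choose_spec.choose_spec }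

noncomputable def syzSeq (N : ModuleCat.{u} R) [Module.Finite R N] : ℕ → Syz R
  | 0 =>
    { c := (Module.Finite.exists_fin' R N).choose
      K := N
      fin := inferInstance
      π := (Module.Finite.exists_fin' R N).choose_spec.choose
      surj := (Module.Finite.exists_fin' R N).choose_spec.choose_spec }
  | (i + 1) => syzStep (syzSeq N i)

variable (N : ModuleCat.{u} R) [Module.Finite R N]

noncomputable def resX (i : ℕ) : ModuleCat.{u} R := ModuleCat.of R (Fin (syzSeq N i).c → R)

noncomputable def resD (i : ℕ) : resX N (i + 1) ⟶ resX N i :=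
  ModuleCat.ofHom ((LinearMap.ker (syzSeq N i).π).subtype ∘ₗ (syzSeq N (i + 1)).π)

lemma resD_comp (n : ℕ) : resD N (n + 1) ≫ resD N n = 0 := by
  ext x
  show (LinearMap.ker (syzSeq N n).π).subtype
    ((syzSeq N (n + 1)).π ((LinearMap.ker (syzSeq N (n + 1)).π).subtype
      ((syzSeq N (n + 2)).π x))) = 0
  rw [show (syzSeq N (n + 1)).π ((LinearMap.ker (syzSeq N (n + 1)).π).subtype
      ((syzSeq N (n + 2)).π x)) = 0 from ((syzSeq N (n + 2)).π x).2]
  simp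
  rfl

noncomputable def resComplex : ChainComplex (ModuleCat.{u} R) ℕ :=
  ChainComplex.of (resX N) (resD N) (resD_comp N)


lemma resComplex_exactAt_succ (n : ℕ) : (resComplex N).ExactAt (n + 1) := by
  rw [HomologicalComplex.exactAt_iff' _ (n + 1 + 1) (n + 1) n (by simp) (by simp)]
  rw [ShortComplex.moduleCat_exact_iff]
  intro (x : (Fin (syzSeq N (n + 1)).c → R)) hx
  have hx' : (syzSeq N (n + 1)).π x = 0 := by
    have h1 : (resComplex N).d (n + 2) (n + 1) = resD N (n + 1) := ChainComplex.of_d _ _ _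
    have h2 : (resComplex N).d (n + 1) n = resD N n := ChainComplex.of_d _ _ _
    have hx2 : resD N n x = 0 := by
      rw [← h2]; exact hx
    exact Subtype.ext hx2
  obtain ⟨y, hy⟩ := (syzSeq N (n + 2)).surj ⟨x, hx'⟩
  refine ⟨y, ?_⟩
  show (resComplex N).d (n + 1 + 1) (n + 1) y = x
  rw [show (resComplex N).d (n + 1 + 1) (n + 1) = resD N (n + 1) from ChainComplex.of_d _ _ _]
  show ((LinearMap.ker (syzSeq N (n + 1)).π).subtype ((syzSeq N (n + 2)).π y) : _) = x
  rw [hy]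
  rfl

noncomputable def resπ0 : resX N 0 ⟶ N := ModuleCat.ofHom (syzSeq N 0).π

lemma resD0_resπ0 : resD N 0 ≫ resπ0 N = 0 := by
  ext x
  show (syzSeq N 0).π ((LinearMap.ker (syzSeq N 0).π).subtype ((syzSeq N 1).π x)) = 0
  exact ((syzSeq N 1).π x).2

lemma resD_resπ0 : (resComplex N).d 1 0 ≫ resπ0 N = 0 := by
  have h1 : (resComplex N).d 1 0 = resD N 0 := ChainComplex.of_d (resX N) (resD N) 0
  rw [h1]
  ext x
  show (syzSeq N 0).π ((LinearMap.ker (syzSeq N 0).π).subtype ((syzSeq N 1).π x)) = 0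
  exact ((syzSeq N 1).π x).2

noncomputable def resπ : resComplex N ⟶ (ChainComplex.single₀ (ModuleCat.{u} R)).obj N :=
  (ChainComplex.toSingle₀Equiv _ _).symm ⟨resπ0 N, resD_resπ0 N⟩

noncomputable def fgResolution : ProjectiveResolution N where
  complex := resComplex N
  projective := fun n =>
    ModuleCat.projective_of_free (M := (resComplex N).X n) (Pi.basisFun R (Fin (syzSeq N n).c))
  π := resπ N
  quasiIso := ⟨fun n => by
    cases n with
    | zero =>
      rw [ChainComplex.quasiIsoAt₀_iff, ShortComplex.quasiIso_iff_of_zeros']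
      · refine (ShortComplex.exact_and_epi_g_iff_of_iso
          (S₂ := ShortComplex.mk (resD N 0) (resπ0 N) (resD0_resπ0 N)) ?_).2 ⟨?_, ?_⟩
        · exact ShortComplex.isoMk (Iso.refl _) (Iso.refl _) (Iso.refl _)
            (by simp [resComplex]; exact (ChainComplex.of_d (resX N) (resD N) 0).symm)
            (by simp only [resπ, Category.id_comp, Category.comp_id]
                exact (ChainComplex.toSingle₀Equiv_symm_apply_f_zero
                  (C := resComplex N) (X := N) (resπ0 N) (resD_resπ0 N)).symm)
        · rw [ShortComplex.moduleCat_exact_iff]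
          intro (x : (Fin (syzSeq N 0).c → R)) hx
          have hx' : (syzSeq N 0).π x = 0 := hx
          obtain ⟨y, hy⟩ := (syzSeq N 1).surj ⟨x, hx'⟩
          refine ⟨y, ?_⟩
          show ((LinearMap.ker (syzSeq N 0).π).subtype ((syzSeq N 1).π y) : _) = x
          rw [hy]
          rfl
        · rw [ModuleCat.epi_iff_surjective]
          exact (syzSeq N 0).surj
      all_goals rfl
    | succ n =>
      rw [quasiIsoAt_iff_exactAt']
      · apply resComplex_exactAt_succ
      · apply ChainComplex.exactAt_succ_single_obj⟩

end Res

section Main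

variable {R : Type u} [CommRing R] {M : Type u} [AddCommGroup M] [Module R M]

noncomputable def evAtBasis (c : ℕ) : ((Fin c → R) →ₗ[R] M) →ₗ[R] (Fin c → M) where
  toFun f := fun j => f (Pi.single j 1)
  map_add' f g := by funext j; simp
  map_smul' r f := by funext j; simp

lemma wl_linearMap_pi (hM : IsWeaklyLaskerian R M) (c : ℕ) :
    IsWeaklyLaskerian R ((Fin c → R) →ₗ[R] M) := by
  refine wl_of_injective (wl_pi hM c) (evAtBasis c) ?_
  intro f g h
  apply LinearMap.pi_ext
  intro j x
  have hj : f (Pi.single j 1) = g (Pi.single j 1) := congrFun h j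
  have hx : (Pi.single j x : Fin c → R) = x • (Pi.single j 1 : Fin c → R) := by
    funext k
    by_cases hk : k = j <;> simp [Pi.single_apply, hk]
  rw [hx, map_smul, map_smul, hj]

end Main

theorem isWeaklyLaskerian_ext (R : Type u) [CommRing R] [IsNoetherianRing R]
    (M N : Type u) [AddCommGroup M] [Module R M] [AddCommGroup N] [Module R N]
    (hM : IsWeaklyLaskerian R M) [Module.Finite R N] (i : ℕ) :
    IsWeaklyLaskerian R
      (((Ext R (ModuleCat.{u} R) i).obj (op (ModuleCat.of R N))).obj (ModuleCat.of R M)) := by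
  letI : Module.Finite R (ModuleCat.of R N) := ‹Module.Finite R N›
  let P := fgResolution (ModuleCat.of R N)
  let K := P.complex.linearYonedaObj R (ModuleCat.of R M)
  let e : (((Ext R (ModuleCat.{u} R) i).obj (op (ModuleCat.of R N))).obj (ModuleCat.of R M)) ≅
      (K.sc i).moduleCatLeftHomologyData.H :=
    P.isoExt i (ModuleCat.of R M) ≪≫ (K.sc i).moduleCatHomologyIso
  refine wl_congr e.toLinearEquiv.symm ?_
  -- the homology is the quotient of a submodule of `K.X i = ((Fin c → R) →ₗ[R] M)`
  have h1 : IsWeaklyLaskerian R ((Fin (syzSeq (ModuleCat.of R N) i).c → R) →ₗ[R] M) :=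
    wl_linearMap_pi hM _
  have h2 : IsWeaklyLaskerian R ((K.sc i).X₂) := wl_congr (ModuleCat.homLinearEquiv (S := R)).symm h1
  have h3 : IsWeaklyLaskerian R (LinearMap.ker (K.sc i).g.hom) :=
    wl_of_injective h2 (LinearMap.ker (K.sc i).g.hom).subtype (Submodule.injective_subtype _)
  exact wl_of_surjective h3 (LinearMap.range (K.sc i).moduleCatToCycles).mkQ
    (Submodule.mkQ_surjective _)
end

section
/- Let R be a commutative Noetherian ring with a fixed maximal ideal m, and let M = ⊕_{i ∈ ℕ} R/m be a countable direct sum of copies of R/m. Then M is m-weakly cofinite but M does not have finite Goldie dimension (M contains an infinite direct sum of nonzero submodules). -/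
open CategoryTheory Opposite

universe u

variable {R : Type u} [CommRing R]

lemma sc_homology_smul_zero (r : R) (S : ShortComplex (ModuleCat.{u} R))
    (h1 : ∀ x : S.X₁, r • x = 0) (h2 : ∀ x : S.X₂, r • x = 0)
    (h3 : ∀ x : S.X₃, r • x = 0) (z : S.homology) : r • z = 0 := by
  have hS : r • 𝟙 S = 0 := by
    ext x
    · exact h1 x
    · exact h2 x
    · exact h3 x
  have e1 : ShortComplex.homologyMap (r • 𝟙 S) = 0 := by
    rw [hS, ShortComplex.homologyMap_zero]
  have e2 : r • z = ShortComplex.homologyMap (r • 𝟙 S) z := by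
    rw [ShortComplex.homologyMap_smul, ShortComplex.homologyMap_id]
    rfl
  rw [e2, e1]
  rfl

lemma ext_smul_eq_zero (r : R) (X M : ModuleCat.{u} R)
    (hM : ∀ x : M, r • x = 0) (n : ℕ)
    (y : ((Ext R (ModuleCat.{u} R) n).obj (op X)).obj M) : r • y = 0 := by
  let P : ProjectiveResolution X := ProjectiveResolution.of X
  let e := P.isoExt (R := R) n M
  let K := P.complex.linearYonedaObj R M
  have hHom : ∀ (j : ℕ) (f : (K.X j : Type u)), r • f = 0 := by
    intro j f
    change P.complex.X j ⟶ M at f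
    change r • f = (0 : P.complex.X j ⟶ M)
    exact ModuleCat.hom_ext (LinearMap.ext fun x => hM (f x))
  have key : ∀ z : ((K.sc n).homology), r • z = 0 := by
    intro z
    refine sc_homology_smul_zero r (K.sc n) (fun x => hHom _ x) (fun x => hHom _ x)
      (fun x => hHom _ x) z
  have : e.hom (r • y) = 0 := by
    rw [map_smul]
    exact key _
  calc r • y = e.inv (e.hom (r • y)) := (Iso.hom_inv_id_apply e (r • y)).symm
    _ = e.inv 0 := by rw [this]
    _ = 0 := map_zero _

/-- `a`-weakly cofinite: support in `V(a)` and all `Ext^i(R/a, M)` weakly Laskerian. -/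
def IsWeaklyCofinite (R : Type u) [CommRing R] (a : Ideal R) (M : ModuleCat.{u} R) : Prop :=
  Module.support R M ⊆ PrimeSpectrum.zeroLocus (a : Set R) ∧
  ∀ i : ℕ, IsWeaklyLaskerian R
    (((Ext R (ModuleCat.{u} R) i).obj (op (ModuleCat.of R (R ⧸ a)))).obj M)

theorem weaklyCofinite_not_finite_goldie (R : Type u) [CommRing R] [IsNoetherianRing R]
    (m : Ideal R) (hm : m.IsMaximal) :
    IsWeaklyCofinite R m (ModuleCat.of R (DirectSum ℕ fun _ : ℕ => R ⧸ m)) ∧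
    ∃ f : ℕ → Submodule R (DirectSum ℕ fun _ : ℕ => R ⧸ m),
      (∀ i, f i ≠ ⊥) ∧ iSupIndep f := by
  have hq : ∀ r ∈ m, ∀ q : R ⧸ m, r • q = 0 := by
    intro r hr q
    obtain ⟨a, rfl⟩ := Submodule.Quotient.mk_surjective m q
    rw [← Submodule.Quotient.mk_smul, Submodule.Quotient.mk_eq_zero]
    exact Ideal.mul_mem_right a m hr
  have hann : ∀ r ∈ m, ∀ x : DirectSum ℕ (fun _ : ℕ => R ⧸ m), r • x = 0 := by
    intro r hr x
    refine DFinsupp.ext fun i => ?_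
    rw [DFinsupp.smul_apply]
    exact hq r hr _
  constructor
  · constructor
    · intro p hp
      rw [PrimeSpectrum.mem_zeroLocus]
      intro r hr
      exact Module.annihilator_le_of_mem_support hp
        (Module.mem_annihilator.mpr (hann r hr))
    · intro i N
      have hkill : ∀ r ∈ m, ∀ x :
          (((Ext R (ModuleCat.{u} R) i).obj (op (ModuleCat.of R (R ⧸ m)))).obj
            (ModuleCat.of R (DirectSum ℕ fun _ : ℕ => R ⧸ m))) ⧸ N, r • x = 0 := by
        intro r hr x
        obtain ⟨y, rfl⟩ := Submodule.Quotient.mk_surjective N x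
        rw [← Submodule.Quotient.mk_smul,
          ext_smul_eq_zero r _ _ (hann r hr) i y, Submodule.Quotient.mk_zero]
      refine Set.Finite.subset (Set.finite_singleton m) ?_
      intro p hp
      obtain ⟨hprime, x, rfl⟩ := hp
      refine Set.mem_singleton_iff.mpr ?_
      refine (hm.eq_of_le hprime.ne_top ?_).symm
      intro r hr
      exact Ideal.le_radical (Submodule.mem_colon_singleton.mpr
        ((Submodule.mem_bot R).mpr (hkill r hr x)))
  · refine ⟨fun i => LinearMap.range (DirectSum.lof R ℕ (fun _ : ℕ => R ⧸ m) i), ?_, ?_⟩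
    · intro i
      rw [Submodule.ne_bot_iff]
      refine ⟨DirectSum.lof R ℕ (fun _ : ℕ => R ⧸ m) i (Submodule.Quotient.mk 1),
        ⟨_, rfl⟩, fun h => ?_⟩
      have := congrArg (fun v => v i) h
      simp only [DirectSum.lof_apply] at this
      rw [show ((0 : DirectSum ℕ fun _ : ℕ => R ⧸ m) i) = 0 from rfl,
        Submodule.Quotient.mk_eq_zero] at this
      exact hm.ne_top (Ideal.eq_top_of_isUnit_mem m this isUnit_one)
    · intro i
      rw [Submodule.disjoint_def]
      intro x hx hsup
      obtain ⟨a, rfl⟩ := hx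
      have hker : (⨆ j, ⨆ (_ : j ≠ i), LinearMap.range (DirectSum.lof R ℕ
          (fun _ : ℕ => R ⧸ m) j)) ≤ LinearMap.ker (DirectSum.component R ℕ _ i) := by
        refine iSup_le fun j => iSup_le fun hj => ?_
        rintro _ ⟨b, rfl⟩
        rw [LinearMap.mem_ker, DirectSum.component.of]
        simp [hj]
      have ha : a = 0 := by
        have := hker hsup
        rw [LinearMap.mem_ker, DirectSum.component.of] at this
        simpa using this
      rw [ha, map_zero]
end
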